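/- Define w(n,i) := 4(n+1)(n−i)(n−i−1)(i−1)/(n(n−1)²·i²(i+1)²(i+2)(i+3)) and u(n,i1,i2) := 4(n+1)(i1−1)(n−i2)(n−i2−1)/(n(n−1)²·i1(i1+1)·i2(i2+1)(i2+2)(i2+3)). Then the sequence r_n := 2·∑_{i=1}^{n−1} w(n,i) + 2·∑_{1 ≤ i1 < i2 ≤ n−1} u(n,i1,i2), defined for integers n ≥ 2, converges as n → ∞ to 11 − 10π²/9. -/

import Mathlib

open Filter

/-- `w(n,i) = Var(V_i^{(n)})`. -/
noncomputable def wVar (n i : ℝ) : ℝ :=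
  4 * (n + 1) * (n - i) * (n - i - 1) * (i - 1) /
    (n * (n - 1) ^ 2 * i ^ 2 * (i + 1) ^ 2 * (i + 2) * (i + 3))

/-- `u(n,i1,i2) = Cov(V_{i1}^{(n)}, V_{i2}^{(n)})`. -/
noncomputable def uCov (n i1 i2 : ℝ) : ℝ :=
  4 * (n + 1) * (i1 - 1) * (n - i2) * (n - i2 - 1) /
    (n * (n - 1) ^ 2 * i1 * (i1 + 1) * i2 * (i2 + 1) * (i2 + 2) * (i2 + 3))

/- auxiliary definitions -/

noncomputable def gAux (n m : ℝ) : ℝ :=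
  -(n * (n - 1)) / (6 * (m + 1)) + n * (n + 2) / (3 * (m + 2)) - (n + 2) * (n + 3) / (6 * (m + 3))

noncomputable def kAux (n i : ℝ) : ℝ := 4 * (n + 1) * (i - 1) / (n * (n - 1) ^ 2 * i * (i + 1))

noncomputable def h1 (N : ℕ) : ℝ := ∑ k ∈ Finset.Icc 1 N, (1 : ℝ) / k
noncomputable def h2 (N : ℕ) : ℝ := ∑ k ∈ Finset.Icc 1 N, (1 : ℝ) / (k : ℝ) ^ 2

noncomputable def bb3 (n : ℝ) : ℝ := (-8 * n ^ 3 + 24 * n ^ 2 + 80 * n + 32) / (3 * n * (n - 1) ^ 2)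
noncomputable def bb4 (n : ℝ) : ℝ := (-16 * n ^ 2 - 48 * n - 32) / (3 * (n - 1) ^ 2)
noncomputable def bb5 (n : ℝ) : ℝ := (-2 * n ^ 3 - 12 * n ^ 2 - 22 * n - 12) / (n * (n - 1) ^ 2)
noncomputable def bb1 (n : ℝ) : ℝ := (14 * n ^ 3 + 12 * n ^ 2 - 14 * n - 4) / (3 * n * (n - 1) ^ 2)
noncomputable def bb2 (n : ℝ) : ℝ := (-4 * n - 4) / (3 * (n - 1))
noncomputable def betaC (n : ℝ) : ℝ := -8 / (3 * n * (n - 1) ^ 2)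
noncomputable def gamC (n : ℝ) : ℝ := (-4 * (n + 1) * (5 * n + 7)) / (3 * (n - 1) ^ 2)

lemma uCov_inner_sum (n i1 : ℕ) (hn : 2 ≤ n) (hi : 1 ≤ i1) :
    ∀ M : ℕ, i1 ≤ M →
      ∑ i2 ∈ Finset.Icc (i1 + 1) M, uCov n i1 i2
        = kAux n i1 * (gAux n M - gAux n i1) := by
  intro M hM
  induction M, hM using Nat.le_induction with
  | base => simp
  | succ M hM ih =>
    rw [Finset.sum_Icc_succ_top (by omega), ih]
    have hn0 : (n : ℝ) ≠ 0 := by positivity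
    have hn1 : (n : ℝ) - 1 ≠ 0 := by
      have : (2 : ℝ) ≤ (n : ℝ) := by exact_mod_cast hn
      nlinarith
    have hi0 : (i1 : ℝ) ≠ 0 := by positivity
    have hi1 : (i1 : ℝ) + 1 ≠ 0 := by positivity
    have hM1 : (M : ℝ) + 1 ≠ 0 := by positivity
    have hM2 : (M : ℝ) + 2 ≠ 0 := by positivity
    have hM3 : (M : ℝ) + 3 ≠ 0 := by positivity
    have hM4 : (M : ℝ) + 4 ≠ 0 := by positivity
    unfold uCov kAux gAux
    push_cast
    field_simp
    ring

noncomputable def ffAux (n i : ℝ) : ℝ :=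
  2 * wVar n i + 2 * kAux n i * (-1 / (3 * (n + 1)) - gAux n i)

lemma ff_pf (n : ℕ) (hn : 2 ≤ n) (i : ℕ) (hi : 1 ≤ i) :
    ffAux n i = bb1 n / i + bb2 n / (i : ℝ) ^ 2 + bb3 n / ((i : ℝ) + 1)
      + bb4 n / ((i : ℝ) + 1) ^ 2 + bb5 n / ((i : ℝ) + 2) := by
  have hn0 : (n : ℝ) ≠ 0 := by positivity
  have hn1 : (n : ℝ) - 1 ≠ 0 := by
    have : (2 : ℝ) ≤ (n : ℝ) := by exact_mod_cast hn
    nlinarith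
  have hnp1 : (n : ℝ) + 1 ≠ 0 := by positivity
  have hi0 : (i : ℝ) ≠ 0 := by
    have : (1 : ℝ) ≤ (i : ℝ) := by exact_mod_cast hi
    positivity
  have hi1 : (i : ℝ) + 1 ≠ 0 := by positivity
  have hi2 : (i : ℝ) + 2 ≠ 0 := by positivity
  have hi3 : (i : ℝ) + 3 ≠ 0 := by positivity
  unfold ffAux wVar kAux gAux bb1 bb2 bb3 bb4 bb5
  field_simp
  ring

lemma beta_split (n : ℝ) (hn0 : n ≠ 0) (hn1 : n - 1 ≠ 0) :
    betaC n = bb1 n + bb3 n + bb5 n := by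
  unfold betaC bb1 bb3 bb5
  field_simp
  ring

lemma gam_split (n : ℝ) (hn0 : n ≠ 0) (hn1 : n - 1 ≠ 0) :
    gamC n = bb2 n + bb4 n := by
  unfold gamC bb2 bb4
  field_simp
  ring

lemma outer_sum (n : ℕ) (hn : 2 ≤ n) (N : ℕ) :
    ∑ i ∈ Finset.Icc 1 N, ffAux n i
      = betaC n * h1 N + gamC n * h2 N
        + bb3 n * (1 / (N + 1) - 1) + bb4 n * (1 / ((N : ℝ) + 1) ^ 2 - 1)
        + bb5 n * (1 / ((N : ℝ) + 1) + 1 / ((N : ℝ) + 2) - 3 / 2) := by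
  have hn0 : (n : ℝ) ≠ 0 := by positivity
  have hn1 : (n : ℝ) - 1 ≠ 0 := by
    have : (2 : ℝ) ≤ (n : ℝ) := by exact_mod_cast hn
    nlinarith
  induction N with
  | zero => norm_num [h1, h2]
  | succ N ih =>
    rw [Finset.sum_Icc_succ_top (by omega), ih]
    have hh1 : h1 (N + 1) = h1 N + 1 / ((N : ℝ) + 1) := by
      unfold h1; rw [Finset.sum_Icc_succ_top (by omega)]; push_cast; ring
    have hh2 : h2 (N + 1) = h2 N + 1 / ((N : ℝ) + 1) ^ 2 := by
      unfold h2; rw [Finset.sum_Icc_succ_top (by omega)]; push_cast; ring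
    rw [hh1, hh2, ff_pf n hn (N + 1) (by omega),
      beta_split (n : ℝ) hn0 hn1, gam_split (n : ℝ) hn0 hn1]
    have hN1 : (N : ℝ) + 1 ≠ 0 := by positivity
    have hN2 : (N : ℝ) + 2 ≠ 0 := by positivity
    have hN3 : (N : ℝ) + 3 ≠ 0 := by positivity
    push_cast
    field_simp
    ring

lemma gAux_top (n : ℕ) (hn : 2 ≤ n) : gAux n ((n : ℝ) - 1) = -1 / (3 * ((n : ℝ) + 1)) := by
  have hn0 : (n : ℝ) ≠ 0 := by positivity
  have hnp1 : (n : ℝ) + 1 ≠ 0 := by positivity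
  have hnp2 : (n : ℝ) + 2 ≠ 0 := by positivity
  unfold gAux
  have e1 : (n : ℝ) - 1 + 1 = n := by ring
  have e2 : (n : ℝ) - 1 + 2 = n + 1 := by ring
  have e3 : (n : ℝ) - 1 + 3 = n + 2 := by ring
  rw [e1, e2, e3]
  field_simp
  ring

/-- Main closed form. -/
lemma main_eq (n : ℕ) (hn : 2 ≤ n) :
    2 * (∑ i ∈ Finset.Icc 1 (n - 1), wVar n i) +
        2 * ∑ i1 ∈ Finset.Icc 1 (n - 1), ∑ i2 ∈ Finset.Icc (i1 + 1) (n - 1), uCov n i1 i2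
      = betaC n * h1 (n - 1) + gamC n * h2 (n - 1)
        + bb3 n * (1 / (n : ℝ) - 1) + bb4 n * (1 / (n : ℝ) ^ 2 - 1)
        + bb5 n * (1 / (n : ℝ) + 1 / ((n : ℝ) + 1) - 3 / 2) := by
  have hcast : ((n - 1 : ℕ) : ℝ) = (n : ℝ) - 1 := by
    have : 1 ≤ n := by omega
    push_cast [this]; ring
  have hsum : ∀ i1 ∈ Finset.Icc 1 (n - 1),
      ∑ i2 ∈ Finset.Icc (i1 + 1) (n - 1), uCov n i1 i2
        = kAux n i1 * (-1 / (3 * ((n : ℝ) + 1)) - gAux n i1) := by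
    intro i1 hi1
    rw [Finset.mem_Icc] at hi1
    rw [uCov_inner_sum n i1 hn hi1.1 (n - 1) hi1.2, hcast, gAux_top n hn]
  rw [Finset.sum_congr rfl hsum]
  have : 2 * (∑ i ∈ Finset.Icc 1 (n - 1), wVar n i) +
      2 * ∑ i1 ∈ Finset.Icc 1 (n - 1), kAux n i1 * (-1 / (3 * ((n : ℝ) + 1)) - gAux n i1)
      = ∑ i ∈ Finset.Icc 1 (n - 1), ffAux n i := by
    rw [Finset.mul_sum, Finset.mul_sum, ← Finset.sum_add_distrib]
    refine Finset.sum_congr rfl fun i _ => ?_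
    unfold ffAux; ring
  rw [this, outer_sum n hn (n - 1), hcast]
  have e1 : (n : ℝ) - 1 + 1 = n := by ring
  have e2 : (n : ℝ) - 1 + 2 = n + 1 := by ring
  rw [e1, e2]

lemma tendsto_inv_nat : Tendsto (fun n : ℕ => 1 / (n : ℝ)) atTop (nhds 0) :=
  tendsto_one_div_atTop_nhds_zero_nat

/-- generic cubic rational limit -/
lemma cube_lim (a3 a2 a1 a0 b3 b2 b1 b0 : ℝ) (hb : b3 ≠ 0) :
    Tendsto (fun n : ℕ =>
        (a3 * n ^ 3 + a2 * n ^ 2 + a1 * n + a0) / (b3 * n ^ 3 + b2 * n ^ 2 + b1 * n + b0))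
      atTop (nhds (a3 / b3)) := by
  have h := tendsto_inv_nat
  have hnum : Tendsto (fun n : ℕ => a3 + a2 * (1 / (n : ℝ)) + a1 * (1 / (n : ℝ)) ^ 2
      + a0 * (1 / (n : ℝ)) ^ 3) atTop (nhds (a3 + a2 * 0 + a1 * 0 ^ 2 + a0 * 0 ^ 3)) := by
    exact (((tendsto_const_nhds.add (h.const_mul a2)).add
      ((h.pow 2).const_mul a1)).add ((h.pow 3).const_mul a0))
  have hden : Tendsto (fun n : ℕ => b3 + b2 * (1 / (n : ℝ)) + b1 * (1 / (n : ℝ)) ^ 2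
      + b0 * (1 / (n : ℝ)) ^ 3) atTop (nhds (b3 + b2 * 0 + b1 * 0 ^ 2 + b0 * 0 ^ 3)) := by
    exact (((tendsto_const_nhds.add (h.const_mul b2)).add
      ((h.pow 2).const_mul b1)).add ((h.pow 3).const_mul b0))
  have hb' : (b3 + b2 * 0 + b1 * 0 ^ 2 + b0 * 0 ^ 3) ≠ 0 := by simpa using hb
  have := hnum.div hden hb'
  have hval : (a3 + a2 * 0 + a1 * 0 ^ 2 + a0 * 0 ^ 3) / (b3 + b2 * 0 + b1 * 0 ^ 2 + b0 * 0 ^ 3)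
      = a3 / b3 := by norm_num
  rw [hval] at this
  refine this.congr' ?_
  filter_upwards [eventually_ge_atTop 1] with n hn
  have hn0 : (n : ℝ) ≠ 0 := by positivity
  have key : ∀ c3 c2 c1 c0 : ℝ, c3 + c2 * (1 / (n : ℝ)) + c1 * (1 / (n : ℝ)) ^ 2
      + c0 * (1 / (n : ℝ)) ^ 3 = (c3 * n ^ 3 + c2 * n ^ 2 + c1 * n + c0) / (n : ℝ) ^ 3 := by
    intro c3 c2 c1 c0; field_simp
  simp only [Pi.div_apply]
  rw [key, key, div_div_div_cancel_right₀ (by positivity : ((n : ℝ) ^ 3) ≠ 0)]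

lemma h2_tendsto : Tendsto (fun n : ℕ => h2 (n - 1)) atTop (nhds (Real.pi ^ 2 / 6)) := by
  have hb := hasSum_zeta_two.tendsto_sum_nat
  have heq : ∀ n : ℕ, 1 ≤ n → h2 (n - 1) = ∑ k ∈ Finset.range n, (1 : ℝ) / (k : ℝ) ^ 2 := by
    intro n hn
    unfold h2
    rw [show Finset.Icc 1 (n - 1) = Finset.Ico 1 n by
      rw [← Finset.Ico_add_one_right_eq_Icc]; congr 1; omega]
    rw [Finset.range_eq_Ico, Finset.sum_eq_sum_Ico_succ_bot (show 0 < n by omega)]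
    norm_num
  refine hb.congr' ?_
  filter_upwards [eventually_ge_atTop 1] with n hn
  exact (heq n hn).symm

lemma h1_le (N : ℕ) : |h1 N| ≤ N := by
  have h0 : 0 ≤ h1 N := Finset.sum_nonneg fun k _ => by positivity
  rw [abs_of_nonneg h0]
  calc h1 N ≤ ∑ k ∈ Finset.Icc 1 N, (1 : ℝ) := by
        refine Finset.sum_le_sum fun k hk => ?_
        rw [Finset.mem_Icc] at hk
        have : (1 : ℝ) ≤ (k : ℝ) := by exact_mod_cast hk.1
        rw [div_le_one (by linarith)]; linarith
    _ = N := by simp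

lemma beta_h1_tendsto : Tendsto (fun n : ℕ => betaC n * h1 (n - 1)) atTop (nhds 0) := by
  have hg : Tendsto (fun n : ℕ => 3 * (1 / (n : ℝ))) atTop (nhds 0) := by
    simpa using tendsto_inv_nat.const_mul (3 : ℝ)
  refine squeeze_zero_norm' ?_ hg
  · filter_upwards [eventually_ge_atTop 2] with n hn
    have hn2 : (2 : ℝ) ≤ (n : ℝ) := by exact_mod_cast hn
    have hn0 : (0 : ℝ) < (n : ℝ) := by linarith
    have hn1 : (1 : ℝ) ≤ (n : ℝ) - 1 := by linarith
    have hb : |betaC (n : ℝ)| = 8 / (3 * n * ((n : ℝ) - 1) ^ 2) := by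
      unfold betaC
      rw [abs_div]
      have : (0:ℝ) < 3 * n * ((n : ℝ) - 1) ^ 2 := by nlinarith
      rw [abs_of_pos this]
      norm_num
    rw [Real.norm_eq_abs, abs_mul, hb]
    have hh := h1_le (n - 1)
    have hcast : ((n - 1 : ℕ) : ℝ) = (n : ℝ) - 1 := by
      push_cast [show 1 ≤ n by omega]; ring
    rw [hcast] at hh
    have hden : (0:ℝ) < 3 * n * ((n : ℝ) - 1) ^ 2 := by nlinarith
    calc 8 / (3 * n * ((n : ℝ) - 1) ^ 2) * |h1 (n - 1)|
        ≤ 8 / (3 * n * ((n : ℝ) - 1) ^ 2) * ((n : ℝ) - 1) := by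
          apply mul_le_mul_of_nonneg_left hh (by positivity)
      _ = 8 / (3 * n * ((n : ℝ) - 1)) := by
          rw [div_mul_eq_mul_div]
          rw [div_eq_div_iff (by nlinarith) (by nlinarith)]
          ring
      _ ≤ 3 * (1 / (n : ℝ)) := by
          rw [mul_one_div, div_le_div_iff₀ (by nlinarith) hn0]
          nlinarith

/-- `Var(∑ (V_i^{(n)} − E[V_i^{(n)}]) Z_i) → 11 − 10π²/9` as `n → ∞`. -/
theorem stmt11 :
    Tendsto (fun n : ℕ =>
        2 * (∑ i ∈ Finset.Icc 1 (n - 1), wVar n i) +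
          2 * ∑ i1 ∈ Finset.Icc 1 (n - 1), ∑ i2 ∈ Finset.Icc (i1 + 1) (n - 1), uCov n i1 i2)
      atTop (nhds (11 - 10 * Real.pi ^ 2 / 9)) := by
  have hinv := tendsto_inv_nat
  have hinv1 : Tendsto (fun n : ℕ => 1 / ((n : ℝ) + 1)) atTop (nhds 0) :=
    tendsto_one_div_add_atTop_nhds_zero_nat
  -- limits of the coefficient functions
  have hb3 : Tendsto (fun n : ℕ => bb3 n) atTop (nhds (-8 / 3)) := by
    have := cube_lim (-8) 24 80 32 3 (-6) 3 0 (by norm_num)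
    refine this.congr' ?_
    filter_upwards [eventually_ge_atTop 1] with n hn
    unfold bb3; ring_nf
  have hb4 : Tendsto (fun n : ℕ => bb4 n) atTop (nhds (-16 / 3)) := by
    have := cube_lim (-16) (-48) (-32) 0 3 (-6) 3 0 (by norm_num)
    refine this.congr' ?_
    filter_upwards [eventually_ge_atTop 2] with n hn
    have hn0 : (n : ℝ) ≠ 0 := by positivity
    have hn1 : (n : ℝ) - 1 ≠ 0 := by
      have : (2:ℝ) ≤ (n:ℝ) := by exact_mod_cast hn
      nlinarith
    have hn2 : (2 : ℝ) ≤ (n : ℝ) := by exact_mod_cast hn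
    have d1 : (0:ℝ) < 3 * (n:ℝ) ^ 3 + -6 * (n:ℝ) ^ 2 + 3 * (n:ℝ) + 0 := by nlinarith
    have d2 : (0:ℝ) < 3 * ((n:ℝ) - 1) ^ 2 := by nlinarith
    unfold bb4
    rw [div_eq_div_iff d1.ne' d2.ne']
    ring
  have hb5 : Tendsto (fun n : ℕ => bb5 n) atTop (nhds (-2)) := by
    have := cube_lim (-2) (-12) (-22) (-12) 1 (-2) 1 0 (by norm_num)
    have h2 : (-2 : ℝ) / 1 = -2 := by norm_num
    rw [h2] at this
    refine this.congr' ?_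
    filter_upwards [eventually_ge_atTop 1] with n hn
    unfold bb5; ring_nf
  have hgam : Tendsto (fun n : ℕ => gamC n) atTop (nhds (-20 / 3)) := by
    have := cube_lim (-20) (-48) (-28) 0 3 (-6) 3 0 (by norm_num)
    refine this.congr' ?_
    filter_upwards [eventually_ge_atTop 2] with n hn
    have hn0 : (n : ℝ) ≠ 0 := by positivity
    have hn1 : (n : ℝ) - 1 ≠ 0 := by
      have : (2:ℝ) ≤ (n:ℝ) := by exact_mod_cast hn
      nlinarith
    have hn2 : (2 : ℝ) ≤ (n : ℝ) := by exact_mod_cast hn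
    have d1 : (0:ℝ) < 3 * (n:ℝ) ^ 3 + -6 * (n:ℝ) ^ 2 + 3 * (n:ℝ) + 0 := by nlinarith
    have d2 : (0:ℝ) < 3 * ((n:ℝ) - 1) ^ 2 := by nlinarith
    unfold gamC
    rw [div_eq_div_iff d1.ne' d2.ne']
    ring
  -- target limit pieces
  have T1 := beta_h1_tendsto
  have T2 : Tendsto (fun n : ℕ => gamC n * h2 (n - 1)) atTop
      (nhds (-20 / 3 * (Real.pi ^ 2 / 6))) := hgam.mul h2_tendsto
  have T3 : Tendsto (fun n : ℕ => bb3 n * (1 / (n : ℝ) - 1)) atTop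
      (nhds (-8 / 3 * (0 - 1))) := hb3.mul (hinv.sub tendsto_const_nhds)
  have T4 : Tendsto (fun n : ℕ => bb4 n * (1 / (n : ℝ) ^ 2 - 1)) atTop
      (nhds (-16 / 3 * (0 ^ 2 - 1))) := by
    refine hb4.mul (Tendsto.sub ?_ tendsto_const_nhds)
    have h := hinv.pow 2
    simp only [div_pow, one_pow] at h
    exact h
  have T5 : Tendsto (fun n : ℕ => bb5 n * (1 / (n : ℝ) + 1 / ((n : ℝ) + 1) - 3 / 2)) atTop
      (nhds (-2 * (0 + 0 - 3 / 2))) := hb5.mul ((hinv.add hinv1).sub tendsto_const_nhds)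
  have total := (((T1.add T2).add T3).add T4).add T5
  have hval : (0 : ℝ) + -20 / 3 * (Real.pi ^ 2 / 6) + -8 / 3 * (0 - 1) + -16 / 3 * ((0:ℝ) ^ 2 - 1)
      + -2 * (0 + 0 - 3 / 2) = 11 - 10 * Real.pi ^ 2 / 9 := by ring
  rw [hval] at total
  refine total.congr' ?_
  filter_upwards [eventually_ge_atTop 2] with n hn
  exact (main_eq n hn).symm
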